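/- Let M be a finite unitary magma of cardinality m. The number of noncrossing configurations of size n in which every edge and the base is labeled by a pair (a, a) with a in M, and every solid diagonal is labeled by a pair (a, b) in M × M with a ≠ b, has ordinary generating series G(t) (with G coefficient 1 at t^1) satisfying t + (m-1)t^2 + (2m^2 t - 3mt + 2t - 1)G(t) + (m^3 - 2m^2 + 2m - 1)G(t)^2 = 0. -/

import Mathlib

abbrev Arc (n : ℕ) : Type := {p : Fin (n+1) × Fin (n+1) // p.1 < p.2}

def isBase {n : ℕ} (a : Arc n) : Prop := a.val.1.val = 0 ∧ a.val.2.val = n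

def isEdge {n : ℕ} (a : Arc n) : Prop := a.val.2.val = a.val.1.val + 1 ∧ ¬ isBase a

def isDiagonal {n : ℕ} (a : Arc n) : Prop := ¬ isEdge a ∧ ¬ isBase a

abbrev MClique (M : Type) (n : ℕ) : Type := Arc n → M

/-- Two arcs `(x, y)` and `(x', y')` cross when `x < x' < y < y'`. -/
def crosses {n : ℕ} (a b : Arc n) : Prop :=
  a.val.1 < b.val.1 ∧ b.val.1 < a.val.2 ∧ a.val.2 < b.val.2

namespace NCHelper

instance {n : ℕ} (a : Arc n) : Decidable (isBase a) := by unfold isBase; infer_instance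
instance {n : ℕ} (a : Arc n) : Decidable (isEdge a) := by unfold isEdge; infer_instance
instance {n : ℕ} (a : Arc n) : Decidable (isDiagonal a) := by unfold isDiagonal; infer_instance
instance {n : ℕ} (a b : Arc n) : Decidable (crosses a b) := by unfold crosses; infer_instance

def mkArc (n x y : ℕ) (hxy : x < y) (hy : y ≤ n) : Arc n :=
  ⟨(⟨x, by omega⟩, ⟨y, by omega⟩), by simp [Fin.lt_def]; omega⟩

@[simp] lemma mkArc_fst (n x y : ℕ) (hxy : x < y) (hy : y ≤ n) :
    ((mkArc n x y hxy hy).val.1 : ℕ) = x := rfl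

@[simp] lemma mkArc_snd (n x y : ℕ) (hxy : x < y) (hy : y ≤ n) :
    ((mkArc n x y hxy hy).val.2 : ℕ) = y := rfl

lemma arc_ext {n : ℕ} {a b : Arc n} (h1 : (a.val.1 : ℕ) = b.val.1) (h2 : (a.val.2 : ℕ) = b.val.2) :
    a = b := by
  apply Subtype.ext
  apply Prod.ext <;> exact Fin.ext (by assumption)

lemma isDiagonal_iff {n : ℕ} (a : Arc n) :
    isDiagonal a ↔ (a.val.2 : ℕ) ≠ a.val.1 + 1 ∧ ¬((a.val.1 : ℕ) = 0 ∧ (a.val.2 : ℕ) = n) := by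
  unfold isDiagonal isEdge isBase; tauto

lemma isBase_iff {n : ℕ} (a : Arc n) :
    isBase a ↔ (a.val.1 : ℕ) = 0 ∧ (a.val.2 : ℕ) = n := Iff.rfl

lemma arc_snd_le {n : ℕ} (a : Arc n) : (a.val.2 : ℕ) ≤ n := by
  have := a.val.2.isLt; omega

lemma arc_fst_lt {n : ℕ} (a : Arc n) : (a.val.1 : ℕ) < (a.val.2 : ℕ) := by
  have := a.property; rwa [Fin.lt_def] at this

lemma crosses_iff {n : ℕ} (a b : Arc n) :
    crosses a b ↔ (a.val.1 : ℕ) < b.val.1 ∧ (b.val.1 : ℕ) < a.val.2 ∧ (a.val.2 : ℕ) < b.val.2 := by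
  unfold crosses
  simp only [Fin.lt_def]

def IsDS {L : Type} {n : ℕ} (d : Arc n → Option L) : Prop :=
  (∀ a, ¬ isDiagonal a → d a = none) ∧
  (∀ a b, d a ≠ none → d b ≠ none → ¬ crosses a b)

abbrev DS (L : Type) (n : ℕ) : Type := {d : Arc n → Option L // IsDS d}

instance {L : Type} [DecidableEq L] {n : ℕ} (d : Arc n → Option L) : Decidable (IsDS d) := by
  unfold IsDS; infer_instance

noncomputable def hN (L : Type) (n : ℕ) : ℕ := Nat.card (DS L n)

lemma arc_one (a : Arc 1) : (a.val.1 : ℕ) = 0 ∧ (a.val.2 : ℕ) = 1 := by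
  have h := a.property
  rw [Fin.lt_def] at h
  omega

lemma hN_one (L : Type) : hN L 1 = 1 := by
  have : ∀ d : DS L 1, d = ⟨fun _ => none, ⟨fun _ _ => rfl, fun a b ha _ _ => ha rfl⟩⟩ := by
    intro d
    apply Subtype.ext
    funext a
    apply d.property.1
    intro hd
    obtain ⟨h1, h2⟩ := arc_one a
    exact hd.2 ⟨h1, h2⟩
  have : Subsingleton (DS L 1) := ⟨fun a b => by rw [this a, this b]⟩
  have hne : Nonempty (DS L 1) := ⟨⟨fun _ => none, ⟨fun _ _ => rfl, fun a b ha _ _ => ha rfl⟩⟩⟩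
  exact Nat.card_unique

end NCHelper


/-- An `M`-noncrossing configuration: an `M`-decorated clique in which no two solid
diagonals (diagonals labeled by a non-unit element) cross. -/
def IsNoncrossing {M : Type} [MulOneClass M] {n : ℕ} (p : MClique M n) : Prop :=
  ∀ a b : Arc n, isDiagonal a → isDiagonal b → p a ≠ 1 → p b ≠ 1 → ¬ crosses a b

/-- A noncrossing configuration with edges and base labeled by pairs `(a, a)` and solid
diagonals labeled by pairs `(a, b)` with `a ≠ b` (non-solid diagonals carry `none`). -/
def IsDualConfig {M : Type} {n : ℕ} (p : Arc n → Option (M × M)) : Prop :=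
  (∀ a : Arc n, ¬ isDiagonal a → ∃ c : M, p a = some (c, c)) ∧
  (∀ a : Arc n, isDiagonal a → ∀ x y : M, p a = some (x, y) → x ≠ y) ∧
  (∀ a b : Arc n, isDiagonal a → isDiagonal b → p a ≠ none → p b ≠ none → ¬ crosses a b)



namespace NCHelper

variable {M : Type} {n : ℕ}

abbrev Lbl (M : Type) : Type := {q : M × M // q.1 ≠ q.2}

def toL : (o : Option (M × M)) → (∀ x y : M, o = some (x,y) → x ≠ y) → Option (Lbl M)
  | none, _ => none
  | some v, h => some ⟨v, h v.1 v.2 (by rw [Prod.mk.eta])⟩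

lemma toL_ne_none {o : Option (M × M)} (h : ∀ x y : M, o = some (x,y) → x ≠ y) :
    toL o h ≠ none ↔ o ≠ none := by
  cases o <;> simp [toL]

lemma toL_map (o : Option (M × M)) (h : ∀ x y : M, o = some (x,y) → x ≠ y) :
    (toL o h).map Subtype.val = o := by
  cases o <;> simp [toL]

lemma toL_map' (o : Option (Lbl M)) (h : ∀ x y : M, o.map Subtype.val = some (x,y) → x ≠ y) :
    toL (o.map Subtype.val) h = o := by
  cases o with
  | none => rfl
  | some v => simp [toL]

lemma get_pair {o : Option (M × M)} {c : M} (hc : o = some (c, c)) (h : o.isSome) :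
    some ((o.get h).1, (o.get h).1) = o := by subst hc; rfl

def nondiagEquiv (hn : 2 ≤ n) : {a : Arc n // ¬ isDiagonal a} ≃ Fin (n+1) where
  toFun a := if isBase a.val then ⟨n, by omega⟩ else
    ⟨a.val.val.1, by have := arc_fst_lt a.val; have := arc_snd_le a.val; omega⟩
  invFun k := if h : (k : ℕ) < n then
      ⟨mkArc n k (k+1) (by omega) (by omega), by
        rw [isDiagonal_iff, mkArc_fst, mkArc_snd]; omega⟩
    else
      ⟨mkArc n 0 n (by omega) le_rfl, by
        rw [isDiagonal_iff, mkArc_fst, mkArc_snd]; omega⟩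
  left_inv := by
    rintro ⟨a, ha⟩
    dsimp only
    rw [isDiagonal_iff] at ha
    have hlt := arc_fst_lt a
    have h2 := arc_snd_le a
    by_cases hb : isBase a
    · simp only [hb, if_true]
      rw [dif_neg (by simp)]
      apply Subtype.ext; apply arc_ext
      · rw [mkArc_fst]; exact hb.1.symm
      · rw [mkArc_snd]; exact hb.2.symm
    · simp only [hb, if_false]
      rw [isBase_iff] at hb
      have he : (a.val.2 : ℕ) = a.val.1 + 1 := by tauto
      rw [dif_pos (by omega)]
      apply Subtype.ext; apply arc_ext
      · rw [mkArc_fst]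
      · rw [mkArc_snd]
        show (a.val.1 : ℕ) + 1 = (a.val.2 : ℕ)
        omega
  right_inv := by
    intro k
    have hk := k.isLt
    dsimp only
    by_cases h : (k : ℕ) < n
    · rw [dif_pos h]
      dsimp only
      rw [if_neg (by rw [isBase_iff, mkArc_fst, mkArc_snd]; omega)]
      exact Fin.ext (by rw [mkArc_fst])
    · rw [dif_neg h]
      dsimp only
      rw [if_pos (by rw [isBase_iff, mkArc_fst, mkArc_snd]; exact ⟨rfl, rfl⟩)]
      exact Fin.ext (by simp; omega)

def configEquiv : {p : Arc n → Option (M × M) // IsDualConfig p} ≃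
    ({a : Arc n // ¬ isDiagonal a} → M) × DS (Lbl M) n where
  toFun p :=
    ⟨fun a => ((p.val a.val).get (by
        obtain ⟨c, hc⟩ := p.property.1 a.val a.property
        rw [hc]; rfl)).1,
     ⟨fun a => if h : isDiagonal a then toL (p.val a) (p.property.2.1 a h) else none,
      ⟨fun a ha => dif_neg ha,
       fun a b ha hb hc => by
        dsimp only at ha hb
        by_cases hda : isDiagonal a
        · by_cases hdb : isDiagonal b
          · rw [dif_pos hda] at ha; rw [dif_pos hdb] at hb
            exact p.property.2.2 a b hda hdb ((toL_ne_none _).1 ha) ((toL_ne_none _).1 hb) hc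
          · exact hb (dif_neg hdb)
        · exact ha (dif_neg hda)⟩⟩⟩
  invFun fd := ⟨fun a => if h : isDiagonal a then (fd.2.val a).map Subtype.val
      else some (fd.1 ⟨a, h⟩, fd.1 ⟨a, h⟩),
    ⟨fun a ha => ⟨fd.1 ⟨a, ha⟩, dif_neg ha⟩,
     fun a ha x y hxy => by
      dsimp only at hxy
      rw [dif_pos ha] at hxy
      rcases ho : fd.2.val a with _ | v
      · rw [ho] at hxy; simp at hxy
      · rw [ho] at hxy; simp at hxy
        have := v.property; rw [hxy] at this; simpa using this,
     fun a b ha hb hpa hpb hc => by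
      dsimp only at hpa hpb
      rw [dif_pos ha] at hpa; rw [dif_pos hb] at hpb
      exact fd.2.property.2 a b (by simpa using hpa) (by simpa using hpb) hc⟩⟩
  left_inv p := by
    apply Subtype.ext; funext a
    by_cases h : isDiagonal a
    · simp only [dif_pos h]
      exact toL_map _ _
    · simp only [dif_neg h]
      obtain ⟨c, hc⟩ := p.property.1 a h
      exact get_pair hc _
  right_inv fd := by
    refine Prod.ext ?_ (Subtype.ext (funext fun a => ?_))
    · funext a
      simp only [dif_neg a.property, Option.get_some]
    · by_cases h : isDiagonal a
      · simp only [dif_pos h]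
        exact toL_map' _ _
      · simp only [dif_neg h]
        exact (fd.2.property.1 a h).symm

end NCHelper

namespace NCHelper

section Cut

variable {L : Type} {n : ℕ}

def solid (d : DS L n) (x y : ℕ) : Prop :=
  ∃ a : Arc n, (a.val.1 : ℕ) = x ∧ (a.val.2 : ℕ) = y ∧ d.val a ≠ none

instance [DecidableEq L] (d : DS L n) (x y : ℕ) : Decidable (solid d x y) := by
  unfold solid; infer_instance

lemma solid_iff (d : DS L n) {x y : ℕ} (hxy : x < y) (hy : y ≤ n) :
    solid d x y ↔ d.val (mkArc n x y hxy hy) ≠ none := by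
  constructor
  · rintro ⟨a, h1, h2, h3⟩
    have : a = mkArc n x y hxy hy := arc_ext (by rw [h1, mkArc_fst]) (by rw [h2, mkArc_snd])
    rwa [this] at h3
  · intro h
    exact ⟨mkArc n x y hxy hy, rfl, rfl, h⟩

variable [DecidableEq L]

def cutSet (d : DS L n) : Finset ℕ :=
  insert 1 ((Finset.Icc 2 (n-1)).filter (fun j => solid d 0 j))

def cut (d : DS L n) : ℕ := (cutSet d).max' ⟨1, Finset.mem_insert_self 1 _⟩

lemma cut_ge_one (d : DS L n) : 1 ≤ cut d := Finset.le_max' _ 1 (Finset.mem_insert_self 1 _)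

lemma cut_le (d : DS L n) (hn : 2 ≤ n) : cut d ≤ n - 1 := by
  apply Finset.max'_le
  intro y hy
  rcases Finset.mem_insert.1 hy with h | h
  · omega
  · have := (Finset.mem_filter.1 h).1
    rw [Finset.mem_Icc] at this
    omega

lemma cut_spec (d : DS L n) : cut d = 1 ∨ (2 ≤ cut d ∧ solid d 0 (cut d)) := by
  have h := Finset.max'_mem (cutSet d) ⟨1, Finset.mem_insert_self 1 _⟩
  rcases Finset.mem_insert.1 h with h | h
  · exact Or.inl h
  · right
    have h1 := (Finset.mem_filter.1 h).1
    rw [Finset.mem_Icc] at h1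
    exact ⟨h1.1, (Finset.mem_filter.1 h).2⟩

lemma cut_max (d : DS L n) {y : ℕ} (h1 : cut d < y) (h2 : y ≤ n - 1) : ¬ solid d 0 y := by
  intro hs
  have hy : y ∈ cutSet d := by
    apply Finset.mem_insert_of_mem
    rw [Finset.mem_filter, Finset.mem_Icc]
    refine ⟨⟨?_, h2⟩, hs⟩
    have := cut_ge_one d
    omega
  have : y ≤ cut d := Finset.le_max' _ y hy
  omega

end Cut

end NCHelper

namespace NCHelper

section Fiber

variable {L : Type} {n : ℕ}

def toIn (j : ℕ) (hjn : j ≤ n) (d : DS L n) : DS L j :=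
  ⟨fun a => if isDiagonal a then
      d.val (mkArc n a.val.1 a.val.2 (arc_fst_lt a) (le_trans (arc_snd_le a) hjn)) else none,
   fun a ha => if_neg ha,
   fun a b ha hb hc => by
    dsimp only at ha hb
    by_cases hda : isDiagonal a
    · by_cases hdb : isDiagonal b
      · rw [if_pos hda] at ha; rw [if_pos hdb] at hb
        rw [crosses_iff] at hc
        refine d.property.2 _ _ ha hb ?_
        rw [crosses_iff, mkArc_fst, mkArc_fst, mkArc_snd, mkArc_snd]
        exact hc
      · exact hb (if_neg hdb)
    · exact ha (if_neg hda)⟩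

def toOut (j k : ℕ) (hjk : j + k ≤ n) (d : DS L n) : DS L k :=
  ⟨fun a => if isDiagonal a then
      d.val (mkArc n (j + a.val.1) (j + a.val.2) (by have := arc_fst_lt a; omega)
        (by have := arc_snd_le a; omega)) else none,
   fun a ha => if_neg ha,
   fun a b ha hb hc => by
    dsimp only at ha hb
    by_cases hda : isDiagonal a
    · by_cases hdb : isDiagonal b
      · rw [if_pos hda] at ha; rw [if_pos hdb] at hb
        rw [crosses_iff] at hc
        refine d.property.2 _ _ ha hb ?_
        rw [crosses_iff, mkArc_fst, mkArc_fst, mkArc_snd, mkArc_snd]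
        omega
      · exact hb (if_neg hdb)
    · exact ha (if_neg hda)⟩

def reconstruct (j k : ℕ) (hn : n = j + k) (hj : 1 ≤ j) (hk : 1 ≤ k)
    (ℓIn ℓOut : Option L) (dIn : DS L j) (dOut : DS L k) : Arc n → Option L :=
  fun a =>
    if h2 : (a.val.2 : ℕ) ≤ j then
      if (a.val.1 : ℕ) = 0 ∧ (a.val.2 : ℕ) = j then ℓIn
      else dIn.val (mkArc j a.val.1 a.val.2 (arc_fst_lt a) h2)
    else if h1 : j ≤ (a.val.1 : ℕ) then
      if (a.val.1 : ℕ) = j ∧ (a.val.2 : ℕ) = n then ℓOut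
      else dOut.val (mkArc k (a.val.1 - j) (a.val.2 - j) (by have := arc_fst_lt a; omega)
        (by have := arc_snd_le a; omega))
    else none

variable {j k : ℕ} {hn : n = j + k} {hj : 1 ≤ j} {hk : 1 ≤ k}
  {ℓIn ℓOut : Option L} {dIn : DS L j} {dOut : DS L k}

lemma rec_base_in (a : Arc n) (h1 : (a.val.1 : ℕ) = 0) (h2 : (a.val.2 : ℕ) = j) :
    reconstruct j k hn hj hk ℓIn ℓOut dIn dOut a = ℓIn := by
  unfold reconstruct
  rw [dif_pos (by omega), if_pos ⟨h1, h2⟩]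

lemma rec_in (a : Arc n) (b : Arc j) (hab1 : (a.val.1 : ℕ) = b.val.1)
    (hab2 : (a.val.2 : ℕ) = b.val.2) (hne : ¬((a.val.1 : ℕ) = 0 ∧ (a.val.2 : ℕ) = j)) :
    reconstruct j k hn hj hk ℓIn ℓOut dIn dOut a = dIn.val b := by
  have h2 : (a.val.2 : ℕ) ≤ j := by have := arc_snd_le b; omega
  unfold reconstruct
  rw [dif_pos h2, if_neg hne]
  have hb : mkArc j (a.val.1 : ℕ) (a.val.2 : ℕ) (arc_fst_lt a) h2 = b :=
    arc_ext (by rw [mkArc_fst]; omega) (by rw [mkArc_snd]; omega)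
  rw [hb]

lemma rec_base_out (a : Arc n) (h1 : (a.val.1 : ℕ) = j) (h2 : (a.val.2 : ℕ) = n) :
    reconstruct j k hn hj hk ℓIn ℓOut dIn dOut a = ℓOut := by
  unfold reconstruct
  rw [dif_neg (by omega), dif_pos (by omega), if_pos ⟨h1, h2⟩]

lemma rec_out (a : Arc n) (b : Arc k) (hab1 : (a.val.1 : ℕ) = j + b.val.1)
    (hab2 : (a.val.2 : ℕ) = j + b.val.2) (hne : ¬((a.val.1 : ℕ) = j ∧ (a.val.2 : ℕ) = n)) :
    reconstruct j k hn hj hk ℓIn ℓOut dIn dOut a = dOut.val b := by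
  have hb1 := arc_fst_lt b
  have hb2 := arc_snd_le b
  unfold reconstruct
  rw [dif_neg (by omega), dif_pos (by omega), if_neg hne]
  have hbe : mkArc k ((a.val.1 : ℕ) - j) ((a.val.2 : ℕ) - j) (by have := arc_fst_lt a; omega)
      (by have := arc_snd_le a; omega) = b :=
    arc_ext (by rw [mkArc_fst]; omega) (by rw [mkArc_snd]; omega)
  rw [hbe]

lemma rec_none (a : Arc n) (h1 : (a.val.1 : ℕ) < j) (h2 : j < (a.val.2 : ℕ)) :
    reconstruct j k hn hj hk ℓIn ℓOut dIn dOut a = none := by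
  unfold reconstruct
  rw [dif_neg (by omega), dif_neg (by omega)]

lemma rec_classify (a : Arc n) (h : reconstruct j k hn hj hk ℓIn ℓOut dIn dOut a ≠ none) :
    (a.val.2 : ℕ) ≤ j ∨ j ≤ (a.val.1 : ℕ) := by
  by_contra hc
  push_neg at hc
  exact h (rec_none a hc.2 hc.1)

lemma rec_isDS (hIn : ℓIn = none ↔ j = 1) (hOut : k = 1 → ℓOut = none) :
    IsDS (reconstruct j k hn hj hk ℓIn ℓOut dIn dOut) := by
  constructor
  · intro a ha
    rw [isDiagonal_iff] at ha
    push_neg at ha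
    have hfst := arc_fst_lt a
    have hsnd := arc_snd_le a
    by_cases hb : (a.val.1 : ℕ) = 0 ∧ (a.val.2 : ℕ) = n
    · exact rec_none a (by omega) (by omega)
    · have he : (a.val.2 : ℕ) = a.val.1 + 1 := by tauto
      by_cases hin : (a.val.2 : ℕ) ≤ j
      · by_cases hbb : (a.val.1 : ℕ) = 0 ∧ (a.val.2 : ℕ) = j
        · rw [rec_base_in a hbb.1 hbb.2, hIn]; omega
        · rw [rec_in a (mkArc j a.val.1 a.val.2 (arc_fst_lt a) hin) (by rw [mkArc_fst])
            (by rw [mkArc_snd]) hbb]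
          apply dIn.property.1
          rw [isDiagonal_iff, mkArc_fst, mkArc_snd]
          omega
      · by_cases hout : j ≤ (a.val.1 : ℕ)
        · by_cases hbb : (a.val.1 : ℕ) = j ∧ (a.val.2 : ℕ) = n
          · rw [rec_base_out a hbb.1 hbb.2]
            exact hOut (by omega)
          · rw [rec_out a (mkArc k (a.val.1 - j) (a.val.2 - j) (by omega) (by omega))
              (by rw [mkArc_fst]; omega) (by rw [mkArc_snd]; omega) hbb]
            apply dOut.property.1
            rw [isDiagonal_iff, mkArc_fst, mkArc_snd]
            omega
        · exact rec_none a (by omega) (by omega)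
  · intro a b ha hb hc
    rw [crosses_iff] at hc
    have ha1 := arc_fst_lt a
    have ha2 := arc_snd_le a
    have hb1 := arc_fst_lt b
    have hb2 := arc_snd_le b
    rcases rec_classify a ha with hA | hA <;> rcases rec_classify b hb with hB | hB
    · -- both inside
      by_cases hba : (a.val.1 : ℕ) = 0 ∧ (a.val.2 : ℕ) = j
      · omega
      · by_cases hbb : (b.val.1 : ℕ) = 0 ∧ (b.val.2 : ℕ) = j
        · omega
        · rw [rec_in a (mkArc j a.val.1 a.val.2 (arc_fst_lt a) hA) (by rw [mkArc_fst])
            (by rw [mkArc_snd]) hba] at ha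
          rw [rec_in b (mkArc j b.val.1 b.val.2 (arc_fst_lt b) hB) (by rw [mkArc_fst])
            (by rw [mkArc_snd]) hbb] at hb
          refine dIn.property.2 _ _ ha hb ?_
          rw [crosses_iff, mkArc_fst, mkArc_fst, mkArc_snd, mkArc_snd]
          exact hc
    · omega
    · omega
    · -- both outside
      by_cases hba : (a.val.1 : ℕ) = j ∧ (a.val.2 : ℕ) = n
      · omega
      · by_cases hbb : (b.val.1 : ℕ) = j ∧ (b.val.2 : ℕ) = n
        · omega
        · rw [rec_out a (mkArc k (a.val.1 - j) (a.val.2 - j) (by omega) (by omega))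
            (by rw [mkArc_fst]; omega) (by rw [mkArc_snd]; omega) hba] at ha
          rw [rec_out b (mkArc k (b.val.1 - j) (b.val.2 - j) (by omega) (by omega))
            (by rw [mkArc_fst]; omega) (by rw [mkArc_snd]; omega) hbb] at hb
          refine dOut.property.2 _ _ ha hb ?_
          rw [crosses_iff, mkArc_fst, mkArc_fst, mkArc_snd, mkArc_snd]
          omega

end Fiber

end NCHelper

namespace NCHelper

section FiberEquiv

variable {L : Type} [DecidableEq L] {n j k : ℕ} {hn : n = j + k} {hj : 1 ≤ j} {hk : 1 ≤ k}
  {ℓIn ℓOut : Option L} {dIn : DS L j} {dOut : DS L k}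

lemma cut_rec (hIn : ℓIn = none ↔ j = 1)
    (d : DS L n) (hd : d.val = reconstruct j k hn hj hk ℓIn ℓOut dIn dOut) : cut d = j := by
  apply le_antisymm
  · apply Finset.max'_le
    intro y hy
    rcases Finset.mem_insert.1 hy with h | h
    · omega
    · rw [Finset.mem_filter, Finset.mem_Icc] at h
      by_contra hlt
      obtain ⟨a, e1, e2, hne⟩ := h.2
      rw [hd] at hne
      exact hne (rec_none a (by omega) (by omega))
  · apply Finset.le_max'
    by_cases hj1 : j = 1
    · rw [hj1]; exact Finset.mem_insert_self 1 _
    · apply Finset.mem_insert_of_mem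
      rw [Finset.mem_filter, Finset.mem_Icc]
      refine ⟨⟨by omega, by omega⟩, ?_⟩
      refine ⟨mkArc n 0 j (by omega) (by omega), mkArc_fst _ _ _ _ _, mkArc_snd _ _ _ _ _, ?_⟩
      rw [hd, rec_base_in _ (mkArc_fst _ _ _ _ _) (mkArc_snd _ _ _ _ _)]
      intro hcon
      exact hj1 (hIn.1 hcon)

end FiberEquiv

section FiberEquiv2

variable {L : Type} [DecidableEq L] {n : ℕ}

def fiberEquiv (j k : ℕ) (hn : n = j + k) (hj : 1 ≤ j) (hk : 1 ≤ k) :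
    {d : DS L n // cut d = j} ≃
      ({ℓ : Option L // ℓ = none ↔ j = 1} × DS L j) ×
      ({ℓ : Option L // k = 1 → ℓ = none} × DS L k) where
  toFun d :=
    ((⟨d.val.val (mkArc n 0 j (by omega) (by omega)), by
        constructor
        · intro hnone
          by_contra hj1
          rcases cut_spec d.val with hc | hc
          · rw [d.property] at hc; exact hj1 hc
          · rw [d.property] at hc
            have := (solid_iff d.val (show 0 < j by omega) (by omega)).1 hc.2
            exact this hnone
        · intro hj1
          apply d.val.property.1
          rw [isDiagonal_iff, mkArc_fst, mkArc_snd]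
          omega⟩,
      toIn j (by omega) d.val),
     (⟨d.val.val (mkArc n j n (by omega) le_rfl), fun hk1 => by
        apply d.val.property.1
        rw [isDiagonal_iff, mkArc_fst, mkArc_snd]
        omega⟩,
      toOut j k (by omega) d.val))
  invFun io :=
    ⟨⟨reconstruct j k hn hj hk io.1.1.val io.2.1.val io.1.2 io.2.2,
      rec_isDS (hn := hn) (hj := hj) (hk := hk) io.1.1.property io.2.1.property⟩,
     cut_rec (hn := hn) (hj := hj) (hk := hk) io.1.1.property
       ⟨reconstruct j k hn hj hk io.1.1.val io.2.1.val io.1.2 io.2.2,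
        rec_isDS (hn := hn) (hj := hj) (hk := hk) io.1.1.property io.2.1.property⟩ rfl⟩
  left_inv := by
    rintro ⟨⟨dd, hdd⟩, hcut⟩
    apply Subtype.ext; apply Subtype.ext
    funext a
    dsimp only
    have ha1 := arc_fst_lt a
    have ha2 := arc_snd_le a
    by_cases h2 : (a.val.2 : ℕ) ≤ j
    · by_cases hbb : (a.val.1 : ℕ) = 0 ∧ (a.val.2 : ℕ) = j
      · rw [rec_base_in a hbb.1 hbb.2]
        have : mkArc n 0 j (by omega) (by omega) = a := arc_ext (by rw [mkArc_fst, hbb.1])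
          (by rw [mkArc_snd, hbb.2])
        rw [this]
      · rw [rec_in a (mkArc j a.val.1 a.val.2 (arc_fst_lt a) h2) (by rw [mkArc_fst])
          (by rw [mkArc_snd]) hbb]
        show (if isDiagonal (mkArc j (a.val.1 : ℕ) (a.val.2 : ℕ) (arc_fst_lt a) h2) then _ else _) = dd a
        by_cases hdg : isDiagonal (mkArc j (a.val.1 : ℕ) (a.val.2 : ℕ) (arc_fst_lt a) h2)
        · rw [if_pos hdg]
          exact congrArg dd (arc_ext (by rw [mkArc_fst, mkArc_fst]) (by rw [mkArc_snd, mkArc_snd]))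
        · rw [if_neg hdg]
          rw [isDiagonal_iff, mkArc_fst, mkArc_snd] at hdg
          push_neg at hdg
          symm
          apply hdd.1
          rw [isDiagonal_iff]
          omega
    · by_cases h1 : j ≤ (a.val.1 : ℕ)
      · by_cases hbb : (a.val.1 : ℕ) = j ∧ (a.val.2 : ℕ) = n
        · rw [rec_base_out a hbb.1 hbb.2]
          have : mkArc n j n (by omega) le_rfl = a := arc_ext (by rw [mkArc_fst, hbb.1])
            (by rw [mkArc_snd, hbb.2])
          rw [this]
        · rw [rec_out a (mkArc k ((a.val.1 : ℕ) - j) ((a.val.2 : ℕ) - j) (by omega) (by omega))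
            (by rw [mkArc_fst]; omega) (by rw [mkArc_snd]; omega) hbb]
          show (if isDiagonal (mkArc k ((a.val.1 : ℕ) - j) ((a.val.2 : ℕ) - j) _ _) then _ else _)
            = dd a
          by_cases hdg : isDiagonal (mkArc k ((a.val.1 : ℕ) - j) ((a.val.2 : ℕ) - j)
            (by omega) (by omega))
          · rw [if_pos hdg]
            exact congrArg dd (arc_ext (by rw [mkArc_fst, mkArc_fst]; omega)
              (by rw [mkArc_snd, mkArc_snd]; omega))
          · rw [if_neg hdg]
            rw [isDiagonal_iff, mkArc_fst, mkArc_snd] at hdg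
            push_neg at hdg
            symm
            apply hdd.1
            rw [isDiagonal_iff]
            omega
      · rw [rec_none a (by omega) (by omega)]
        by_contra hne
        have hne' : dd a ≠ none := fun hcon => hne hcon.symm
        by_cases ha0 : (a.val.1 : ℕ) = 0
        · by_cases hyn : (a.val.2 : ℕ) = n
          · exact hne' (hdd.1 a (by rw [isDiagonal_iff]; omega))
          · have hs : solid ⟨dd, hdd⟩ 0 (a.val.2 : ℕ) := ⟨a, ha0, rfl, hne'⟩
            exact cut_max ⟨dd, hdd⟩ (by omega) (by omega) hs
        · rcases cut_spec ⟨dd, hdd⟩ with hcs | hcs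
          · rw [hcut] at hcs; omega
          · rw [hcut] at hcs
            obtain ⟨b, hb1, hb2, hbne⟩ := hcs.2
            exact hdd.2 b a hbne hne' ((crosses_iff b a).2 (by omega))
  right_inv := by
    rintro ⟨⟨⟨ℓI, hI⟩, dI⟩, ⟨⟨ℓO, hO⟩, dO⟩⟩
    refine Prod.ext (Prod.ext ?_ ?_) (Prod.ext ?_ ?_)
    · apply Subtype.ext
      dsimp only
      exact rec_base_in (hn := hn) (hj := hj) (hk := hk) (ℓIn := ℓI) (ℓOut := ℓO) (dIn := dI) (dOut := dO) _ (mkArc_fst _ _ _ _ _) (mkArc_snd _ _ _ _ _)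
    · apply Subtype.ext
      funext a
      dsimp only
      show (if isDiagonal a then _ else _) = dI.val a
      by_cases hdg : isDiagonal a
      · rw [if_pos hdg]
        exact rec_in (hn := hn) (hj := hj) (hk := hk) (ℓIn := ℓI) (ℓOut := ℓO) (dIn := dI) (dOut := dO) (mkArc n (a.val.1 : ℕ) (a.val.2 : ℕ) (arc_fst_lt a)
          (le_trans (arc_snd_le a) (by omega))) a (by rw [mkArc_fst]) (by rw [mkArc_snd])
          (by rw [mkArc_fst, mkArc_snd]; rw [isDiagonal_iff] at hdg; exact hdg.2)
      · rw [if_neg hdg]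
        exact (dI.property.1 a hdg).symm
    · apply Subtype.ext
      dsimp only
      exact rec_base_out (hn := hn) (hj := hj) (hk := hk) (ℓIn := ℓI) (ℓOut := ℓO) (dIn := dI) (dOut := dO) _ (mkArc_fst _ _ _ _ _) (mkArc_snd _ _ _ _ _)
    · apply Subtype.ext
      funext a
      dsimp only
      show (if isDiagonal a then _ else _) = dO.val a
      by_cases hdg : isDiagonal a
      · rw [if_pos hdg]
        exact rec_out (hn := hn) (hj := hj) (hk := hk) (ℓIn := ℓI) (ℓOut := ℓO) (dIn := dI) (dOut := dO) (mkArc n (j + (a.val.1 : ℕ)) (j + (a.val.2 : ℕ))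
          (by have := arc_fst_lt a; omega) (by have := arc_snd_le a; omega)) a
          (by rw [mkArc_fst]) (by rw [mkArc_snd])
          (by
            rw [mkArc_fst, mkArc_snd]
            rw [isDiagonal_iff] at hdg
            have h1 := arc_fst_lt a
            have h2 := arc_snd_le a
            omega)
      · rw [if_neg hdg]
        exact (dO.property.1 a hdg).symm

end FiberEquiv2

end NCHelper

namespace NCHelper

section Counting

variable {L M : Type}

instance instFintypeDS [Fintype L] [DecidableEq L] (n : ℕ) : Fintype (DS L n) :=
  Subtype.fintype _

def neNoneEquiv (L : Type) : {ℓ : Option L // ℓ ≠ none} ≃ L where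
  toFun ℓ := ℓ.val.get (Option.isSome_iff_ne_none.2 ℓ.property)
  invFun x := ⟨some x, by simp⟩
  left_inv ℓ := Subtype.ext (Option.some_get _)
  right_inv x := rfl

instance : Unique {ℓ : Option L // ℓ = none} where
  default := ⟨none, rfl⟩
  uniq ℓ := Subtype.ext ℓ.property

lemma card_inside [Fintype L] [DecidableEq L] (j : ℕ) :
    Nat.card ({ℓ : Option L // ℓ = none ↔ j = 1} × DS L j)
      = (if j = 1 then 1 else Fintype.card L) * hN L j := by
  rw [Nat.card_prod]
  congr 1
  by_cases hj : j = 1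
  · rw [if_pos hj]
    rw [Nat.card_congr (Equiv.subtypeEquivRight (q := fun ℓ : Option L => ℓ = none)
      (fun ℓ => by simp [hj]))]
    exact Nat.card_unique
  · rw [if_neg hj]
    rw [Nat.card_congr (Equiv.subtypeEquivRight (q := fun ℓ : Option L => ℓ ≠ none)
      (fun ℓ => by simp [hj]))]
    rw [Nat.card_congr (neNoneEquiv L), Nat.card_eq_fintype_card]

lemma card_outside [Fintype L] [DecidableEq L] (k : ℕ) :
    Nat.card ({ℓ : Option L // k = 1 → ℓ = none} × DS L k)
      = (if k = 1 then 1 else Fintype.card L + 1) * hN L k := by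
  rw [Nat.card_prod]
  congr 1
  by_cases hk : k = 1
  · rw [if_pos hk]
    rw [Nat.card_congr (Equiv.subtypeEquivRight (q := fun ℓ : Option L => ℓ = none)
      (fun ℓ => by simp [hk]))]
    exact Nat.card_unique
  · rw [if_neg hk]
    rw [Nat.card_congr (Equiv.subtypeUnivEquiv (fun ℓ => fun h => absurd h hk)),
      Nat.card_eq_fintype_card, Fintype.card_option]

theorem hN_rec (L : Type) [Fintype L] [DecidableEq L] {n : ℕ} (hn : 2 ≤ n) :
    hN L n = ∑ j ∈ Finset.Icc 1 (n-1),
      ((if j = 1 then 1 else Fintype.card L) * hN L j) *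
      ((if n - j = 1 then 1 else Fintype.card L + 1) * hN L (n - j)) := by
  rw [hN, Nat.card_eq_fintype_card, ← Finset.card_univ]
  rw [Finset.card_eq_sum_card_fiberwise (f := fun d : DS L n => cut d)
    (t := Finset.Icc 1 (n-1))
    (fun d _ => by rw [Finset.mem_coe, Finset.mem_Icc]; exact ⟨cut_ge_one d, cut_le d hn⟩)]
  apply Finset.sum_congr rfl
  intro j hj
  rw [Finset.mem_Icc] at hj
  rw [← Fintype.card_subtype, ← Nat.card_eq_fintype_card,
    Nat.card_congr (fiberEquiv j (n-j) (by omega) (by omega) (by omega)),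
    Nat.card_prod, card_inside, card_outside]

def diagPairEquiv (M : Type) : {q : M × M // q.1 = q.2} ≃ M where
  toFun q := q.val.1
  invFun m := ⟨(m, m), rfl⟩
  left_inv q := Subtype.ext (Prod.ext rfl q.property)
  right_inv m := rfl

lemma card_lbl (M : Type) [Fintype M] [DecidableEq M] :
    Fintype.card (Lbl M) = Fintype.card M * Fintype.card M - Fintype.card M := by
  have h1 : Fintype.card (Lbl M) =
      Fintype.card (M × M) - Fintype.card {q : M × M // q.1 = q.2} :=
    Fintype.card_subtype_compl _
  rw [h1, Fintype.card_prod, Fintype.card_congr (diagPairEquiv M)]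

theorem config_card (M : Type) [Fintype M] [DecidableEq M] {n : ℕ} (hn : 2 ≤ n) :
    Nat.card {p : Arc n → Option (M × M) // IsDualConfig p}
      = Fintype.card M ^ (n+1) * hN (Lbl M) n := by
  rw [Nat.card_congr (configEquiv (M := M) (n := n)), Nat.card_prod, Nat.card_fun,
    Nat.card_congr (nondiagEquiv hn), Nat.card_eq_fintype_card (α := Fin (n+1)),
    Fintype.card_fin, Nat.card_eq_fintype_card (α := M), hN]

end Counting

end NCHelper

namespace NCHelper

section Series

open PowerSeries

variable (L : Type) [Fintype L] [DecidableEq L]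

noncomputable def Hser : PowerSeries ℤ :=
  PowerSeries.mk fun s => if s = 0 then 0 else (hN L s : ℤ)

noncomputable def Aser : PowerSeries ℤ :=
  PowerSeries.mk fun s => if s = 0 then 0 else if s = 1 then 1
    else (Fintype.card L : ℤ) * (hN L s : ℤ)

noncomputable def Rser : PowerSeries ℤ :=
  PowerSeries.mk fun s => if s = 0 then 0 else if s = 1 then 1
    else ((Fintype.card L : ℤ) + 1) * (hN L s : ℤ)

lemma Aser_eq : Aser L = X + C (Fintype.card L : ℤ) * (Hser L - X) := by
  ext s
  rw [map_add, coeff_C_mul, map_sub]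
  simp only [Aser, Hser, coeff_mk, coeff_X]
  rcases s with _ | s
  · norm_num
  · rcases s with _ | s
    · simp [hN_one L]
    · simp

lemma Rser_eq : Rser L = X + C ((Fintype.card L : ℤ) + 1) * (Hser L - X) := by
  ext s
  rw [map_add, coeff_C_mul, map_sub]
  simp only [Rser, Hser, coeff_mk, coeff_X]
  rcases s with _ | s
  · norm_num
  · rcases s with _ | s
    · simp [hN_one L]
    · simp

lemma aterm (k : ℕ) (hk : 1 ≤ k) :
    (if k = 0 then (0:ℤ) else if k = 1 then 1 else (Fintype.card L : ℤ) * (hN L k : ℤ))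
      = (if k = 1 then (1:ℤ) else (Fintype.card L : ℤ)) * (hN L k : ℤ) := by
  rcases k with _ | k
  · omega
  · rcases k with _ | k
    · simp [hN_one L]
    · simp

lemma rterm (k : ℕ) (hk : 1 ≤ k) :
    (if k = 0 then (0:ℤ) else if k = 1 then 1 else ((Fintype.card L : ℤ) + 1) * (hN L k : ℤ))
      = (if k = 1 then (1:ℤ) else (Fintype.card L : ℤ) + 1) * (hN L k : ℤ) := by
  rcases k with _ | k
  · omega
  · rcases k with _ | k
    · simp [hN_one L]
    · simp

lemma aterm2 (i : ℕ) :
    (if i = 0 then (1:ℤ) else (Fintype.card L : ℤ) * (hN L (i+1) : ℤ))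
      = (if i + 1 = 1 then (1:ℤ) else (Fintype.card L : ℤ)) * (hN L (i+1) : ℤ) := by
  rcases i with _ | i
  · simp [hN_one L]
  · simp

lemma Hser_eq : Hser L = X + Aser L * Rser L := by
  ext s
  rw [map_add, PowerSeries.coeff_mul, Finset.Nat.sum_antidiagonal_eq_sum_range_succ_mk]
  simp only [Hser, Aser, Rser, coeff_mk, coeff_X]
  rcases s with _ | s
  · simp
  · rcases s with _ | s
    · norm_num [Finset.sum_range_succ, hN_one L]
    · rw [if_neg (by omega), if_neg (by omega), zero_add]
      have key : (∑ k ∈ Finset.range (s + 2 + 1),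
          (if k = 0 then (0:ℤ) else if k = 1 then 1 else (Fintype.card L : ℤ) * (hN L k : ℤ)) *
          (if s + 2 - k = 0 then (0:ℤ) else if s + 2 - k = 1 then 1
            else ((Fintype.card L : ℤ) + 1) * (hN L (s + 2 - k) : ℤ)))
          = (hN L (s + 2) : ℤ) := by
        rw [Finset.sum_range_succ, Finset.sum_range_succ']
        rw [Nat.sub_self]
        simp only [eq_self_iff_true, if_true, mul_zero, zero_mul, add_zero]
        rw [hN_rec L (show 2 ≤ s + 2 by omega)]
        rw [show s + 2 - 1 = s + 1 by omega, ← Finset.Ico_add_one_right_eq_Icc,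
          Finset.sum_Ico_eq_sum_range]
        rw [show s + 1 + 1 - 1 = s + 1 by omega]
        push_cast
        apply Finset.sum_congr rfl
        intro i hi
        rw [Finset.mem_range] at hi
        rw [show (1:ℕ) + i = i + 1 by omega]
        rw [show s + 1 - i = s + 2 - (i+1) by omega]
        rw [aterm2 L i, rterm L (s + 2 - (i+1)) (by omega)]
      exact key.symm

end Series

end NCHelper


/-- The ordinary generating series `G(t)` of these configurations, with coefficient `1`
at `t^1`. -/
noncomputable def dualSeries (M : Type) : PowerSeries ℤ :=
  PowerSeries.mk fun n =>
    if n = 1 then 1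
    else if n < 2 then 0
    else (Nat.card {p : Arc n → Option (M × M) // IsDualConfig p} : ℤ)

namespace NCHelper

open PowerSeries

lemma rescale_C' (a b : ℤ) : rescale a (C b) = C b := by
  ext n
  rw [coeff_rescale, coeff_C]
  rcases n with _ | n
  · simp
  · simp

lemma dualSeries_eq (M : Type) [Fintype M] [DecidableEq M] :
    dualSeries M = C (Fintype.card M : ℤ) * rescale (Fintype.card M : ℤ) (Hser (Lbl M))
      + C (1 - (Fintype.card M : ℤ)^2) * X := by
  ext s
  rw [map_add, coeff_C_mul, coeff_C_mul, coeff_rescale, coeff_X]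
  simp only [dualSeries, Hser, coeff_mk]
  rcases s with _ | s
  · norm_num
  · rcases s with _ | s
    · simp only [if_pos rfl, if_neg (by omega : ¬(1:ℕ) = 0), hN_one (Lbl M)]
      push_cast
      ring
    · rw [if_neg (by omega), if_neg (by omega), if_neg (by omega), if_neg (by omega)]
      rw [config_card M (show 2 ≤ s + 2 by omega)]
      push_cast
      ring

lemma cast_eq_C (z : ℤ) : ((z : PowerSeries ℤ)) = C z := by
  rw [← map_intCast (C (R := ℤ)) z, Int.cast_id]

lemma card_lbl_int (M : Type) [Fintype M] [DecidableEq M] :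
    ((Fintype.card (Lbl M) : ℤ)) = (Fintype.card M : ℤ)^2 - (Fintype.card M : ℤ) := by
  rw [card_lbl]
  have hle : Fintype.card M ≤ Fintype.card M * Fintype.card M := by
    rcases Nat.eq_zero_or_pos (Fintype.card M) with h | h
    · simp [h]
    · exact Nat.le_mul_of_pos_left _ h
  push_cast [Nat.cast_sub hle]
  ring

end NCHelper


/-- For a finite unitary magma `M` of cardinality `m`, the generating series `G` of
noncrossing configurations whose edges and base are labeled by pairs `(a, a)` and whose
solid diagonals are labeled by pairs `(a, b)` with `a ≠ b` satisfies
`t + (m - 1) t² + (2m² t - 3m t + 2t - 1) G + (m³ - 2m² + 2m - 1) G² = 0`. -/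
theorem stmt19 (M : Type) [Fintype M] [MulOneClass M] :
    (PowerSeries.X : PowerSeries ℤ)
      + (((Fintype.card M : ℤ) - 1 : ℤ) : PowerSeries ℤ) * PowerSeries.X ^ 2
      + (((2 * (Fintype.card M : ℤ) ^ 2 : ℤ) : PowerSeries ℤ) * PowerSeries.X
          - ((3 * (Fintype.card M : ℤ) : ℤ) : PowerSeries ℤ) * PowerSeries.X
          + 2 * PowerSeries.X - 1) * dualSeries M
      + (((Fintype.card M : ℤ) ^ 3 - 2 * (Fintype.card M : ℤ) ^ 2
            + 2 * (Fintype.card M : ℤ) - 1 : ℤ) : PowerSeries ℤ) * dualSeries M ^ 2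
      = 0 := by
  classical
  open PowerSeries NCHelper in
  set m : ℤ := (Fintype.card M : ℤ) with hm
  have hstar2 : Hser (Lbl M) = X + (X + C (Fintype.card (Lbl M) : ℤ) * (Hser (Lbl M) - X))
      * (X + C ((Fintype.card (Lbl M) : ℤ) + 1) * (Hser (Lbl M) - X)) := by
    rw [← Aser_eq, ← Rser_eq]
    exact Hser_eq _
  have h3 := congrArg (rescale m) hstar2
  simp only [map_add, map_mul, map_sub, rescale_X, rescale_C'] at h3
  rw [card_lbl_int M] at h3
  rw [dualSeries_eq M]
  simp only [cast_eq_C]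
  simp only [map_sub, map_add, map_mul, map_pow, map_one, map_ofNat] at h3 ⊢
  linear_combination (-(C m)) * h3
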